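/- arXiv:1908.08981 — 11 statements merged into one kernel-verified Lean document; each statement's English description precedes it below -/
import Mathlib

section
/- Let Θ be the trial-to-test operator for a bounded bilinear form b on U × V. If b satisfies the inf-sup condition with constant γ > 0, then the bilinear form (u, w) ↦ b(u, Θw) is symmetric, bounded by M² (i.e. |b(u, Θw)| ≤ M²·‖u‖_U·‖w‖_U for all u, w ∈ U), and coercive on U: b(u, Θu) ≥ γ²·‖u‖_U² for all u ∈ U. -/
open scoped InnerProductSpace

/-- under the inf-sup condition, the form `(u,w) ↦ b(u, Θw)` is
symmetric, bounded by `M²` and coercive with constant `γ²`. -/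
theorem statement1
    {U V : Type*} [NormedAddCommGroup U] [InnerProductSpace ℝ U] [CompleteSpace U]
    [NormedAddCommGroup V] [InnerProductSpace ℝ V] [CompleteSpace V]
    (b : U →L[ℝ] V →L[ℝ] ℝ) (M γ : ℝ)
    (hM : ∀ (u : U) (v : V), |b u v| ≤ M * ‖u‖ * ‖v‖)
    (hγ : 0 < γ)
    (hinfsup : ∀ u : U, γ * ‖u‖ ≤ ⨆ v : {v : V // v ≠ 0}, b u v.1 / ‖v.1‖)
    (Θ : U → V) (hΘ : ∀ (u : U) (v : V), ⟪Θ u, v⟫_ℝ = b u v) :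
    (∀ u w : U, b u (Θ w) = b w (Θ u)) ∧
    (∀ u w : U, |b u (Θ w)| ≤ M ^ 2 * ‖u‖ * ‖w‖) ∧
    (∀ u : U, γ ^ 2 * ‖u‖ ^ 2 ≤ b u (Θ u)) := by
  have hsym : ∀ u w : U, b u (Θ w) = b w (Θ u) := by
    intro u w
    rw [← hΘ u (Θ w), ← hΘ w (Θ u), real_inner_comm]
  have hlow : ∀ u : U, γ * ‖u‖ ≤ ‖Θ u‖ := by
    intro u
    refine (hinfsup u).trans (Real.iSup_le ?_ (norm_nonneg _))
    rintro ⟨v, hv⟩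
    have hvpos : 0 < ‖v‖ := norm_pos_iff.mpr hv
    rw [div_le_iff₀ hvpos, ← hΘ u v]
    exact (le_abs_self _).trans (abs_real_inner_le_norm _ _)
  have hnorm : ∀ u : U, ‖Θ u‖ ≤ M * ‖u‖ := by
    intro u
    by_cases h : Θ u = 0
    · have hu : u = 0 := by
        have h2 := hlow u
        rw [h, norm_zero] at h2
        have h3 : ‖u‖ ≤ 0 := by nlinarith [norm_nonneg u]
        exact norm_le_zero_iff.mp h3
      rw [hu] at h ⊢
      simp [h]
    · have h1 : ‖Θ u‖ ^ 2 = b u (Θ u) := by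
        rw [← hΘ u (Θ u), real_inner_self_eq_norm_sq]
      have h2 : ‖Θ u‖ ^ 2 ≤ M * ‖u‖ * ‖Θ u‖ := by
        rw [h1]; exact (le_abs_self _).trans (hM u (Θ u))
      have hpos : 0 < ‖Θ u‖ := norm_pos_iff.mpr h
      nlinarith
  refine ⟨hsym, ?_, ?_⟩
  · intro u w
    rw [← hΘ u (Θ w)]
    calc |⟪Θ u, Θ w⟫_ℝ| ≤ ‖Θ u‖ * ‖Θ w‖ := abs_real_inner_le_norm _ _
      _ ≤ (M * ‖u‖) * (M * ‖w‖) := by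
          have h0 : (0:ℝ) ≤ M * ‖u‖ := (norm_nonneg _).trans (hnorm u)
          exact mul_le_mul (hnorm u) (hnorm w) (norm_nonneg _) h0
      _ = M ^ 2 * ‖u‖ * ‖w‖ := by ring
  · intro u
    have hγu : γ * ‖u‖ ≤ ‖Θ u‖ := hlow u
    have h1 : ‖Θ u‖ ^ 2 = b u (Θ u) := by
      rw [← hΘ u (Θ u), real_inner_self_eq_norm_sq]
    nlinarith [norm_nonneg u, norm_nonneg (Θ u), mul_nonneg hγ.le (norm_nonneg u)]
end

section
/- (Ideal DPG quasi-optimality.) Assume b is bounded with constant M and satisfies the inf-sup condition with constant γ > 0. Let F ∈ V' and let u ∈ U satisfy b(u, v) = F(v) for all v ∈ V. Let U_h ⊆ U be a finite-dimensional subspace. Then there exists a unique u_h ∈ U_h such that b(u_h, Θw_h) = F(Θw_h) for all w_h ∈ U_h, and it satisfies the quasi-optimal error estimate ‖u − u_h‖_U ≤ (M/γ)·inf_{w_h ∈ U_h} ‖u − w_h‖_U. -/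
open scoped InnerProductSpace

/-- ideal DPG quasi-optimality. -/
theorem statement2
    {U V : Type*} [NormedAddCommGroup U] [InnerProductSpace ℝ U] [CompleteSpace U]
    [NormedAddCommGroup V] [InnerProductSpace ℝ V] [CompleteSpace V]
    (b : U →L[ℝ] V →L[ℝ] ℝ) (M γ : ℝ)
    (hM : ∀ (u : U) (v : V), |b u v| ≤ M * ‖u‖ * ‖v‖)
    (hγ : 0 < γ)
    (hinfsup : ∀ u : U, γ * ‖u‖ ≤ ⨆ v : {v : V // v ≠ 0}, b u v.1 / ‖v.1‖)
    (Θ : U → V) (hΘ : ∀ (u : U) (v : V), ⟪Θ u, v⟫_ℝ = b u v)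
    (F : V →L[ℝ] ℝ) (u : U) (hu : ∀ v : V, b u v = F v)
    (Uh : Submodule ℝ U) [FiniteDimensional ℝ Uh] :
    (∃! uh : Uh, ∀ wh : Uh, b uh (Θ wh) = F (Θ wh)) ∧
    (∀ uh : Uh, (∀ wh : Uh, b uh (Θ wh) = F (Θ wh)) →
      ‖u - uh‖ ≤ M / γ * ⨅ wh : Uh, ‖u - (wh : U)‖) := by
  -- Θ as a linear map
  set T : U →ₗ[ℝ] V :=
    { toFun := Θ
      map_add' := by
        intro x y
        refine ext_inner_right ℝ fun v => ?_
        simp [hΘ, inner_add_left]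
      map_smul' := by
        intro c x
        refine ext_inner_right ℝ fun v => ?_
        simp [hΘ, inner_smul_left] } with hTdef
  have hTΘ : ∀ x : U, T x = Θ x := fun x => rfl
  -- lower bound: γ ‖x‖ ≤ ‖T x‖
  have hlow : ∀ x : U, γ * ‖x‖ ≤ ‖T x‖ := by
    intro x
    refine (hinfsup x).trans (Real.iSup_le (fun v => ?_) (norm_nonneg _))
    rw [← hΘ x v.1, hTΘ]
    rcases eq_or_lt_of_le (norm_nonneg v.1) with h0 | h0
    · simp [← h0]
    · rw [div_le_iff₀ h0]
      exact (real_inner_le_norm _ _)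
  -- upper bound: ‖T x‖ ≤ M ‖x‖
  have hup : ∀ x : U, ‖T x‖ ≤ M * ‖x‖ := by
    intro x
    rcases eq_or_ne x 0 with rfl | hx
    · simp
    · have hxn : (0 : ℝ) < ‖x‖ := norm_pos_iff.mpr hx
      have hTx : (0 : ℝ) < ‖T x‖ := lt_of_lt_of_le (mul_pos hγ hxn) (hlow x)
      have h1 : ‖T x‖ * ‖T x‖ ≤ M * ‖x‖ * ‖T x‖ := by
        have h2 : ⟪T x, T x⟫_ℝ = b x (T x) := by rw [hTΘ]; exact hΘ x (Θ x)
        calc ‖T x‖ * ‖T x‖ = ⟪T x, T x⟫_ℝ := (real_inner_self_eq_norm_mul_norm _).symm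
          _ = b x (T x) := h2
          _ ≤ |b x (T x)| := le_abs_self _
          _ ≤ M * ‖x‖ * ‖T x‖ := hM x (T x)
      exact le_of_mul_le_mul_right h1 hTx
  -- key reformulation of the discrete equation
  have hkey : ∀ uh : Uh, (∀ wh : Uh, b uh (Θ wh) = F (Θ wh)) ↔
      (∀ wh : Uh, ⟪T u - T uh, T wh⟫_ℝ = 0) := by
    intro uh
    constructor
    · intro h wh
      have h1 : ⟪T uh, T wh⟫_ℝ = b uh (Θ wh) := by rw [hTΘ, hTΘ]; exact hΘ _ _
      have h2 : ⟪T u, T wh⟫_ℝ = F (Θ wh) := by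
        rw [hTΘ, hTΘ]; rw [hΘ u (Θ wh)]; exact hu (Θ wh)
      rw [inner_sub_left, h1, h2, h wh, sub_self]
    · intro h wh
      have h0 := h wh
      rw [inner_sub_left, sub_eq_zero] at h0
      have h1 : ⟪T uh, T wh⟫_ℝ = b uh (Θ wh) := by rw [hTΘ, hTΘ]; exact hΘ _ _
      have h2 : ⟪T u, T wh⟫_ℝ = F (Θ wh) := by
        rw [hTΘ, hTΘ]; rw [hΘ u (Θ wh)]; exact hu (Θ wh)
      rw [← h1, ← h0, h2]
  -- T is injective (from the lower bound)
  have hinj : ∀ x : U, T x = 0 → x = 0 := by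
    intro x hx
    have h1 := hlow x
    rw [hx, norm_zero] at h1
    have : ‖x‖ = 0 := le_antisymm (by nlinarith [norm_nonneg x]) (norm_nonneg x)
    exact norm_eq_zero.mp this
  -- uniqueness lemma
  have huniq : ∀ x y : Uh, (∀ wh : Uh, ⟪T u - T x, T wh⟫_ℝ = 0) →
      (∀ wh : Uh, ⟪T u - T y, T wh⟫_ℝ = 0) → x = y := by
    intro x y hx hy
    have h0 : ∀ wh : Uh, ⟪T (x : U) - T (y : U), T wh⟫_ℝ = 0 := by
      intro wh
      have hx' := hx wh
      have hy' := hy wh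
      rw [inner_sub_left] at hx' hy'
      rw [inner_sub_left]
      linarith
    have hxy : T ((x : U) - (y : U)) = 0 := by
      have h2 := h0 (x - y)
      have hc : ((x - y : Uh) : U) = (x : U) - (y : U) := rfl
      rw [hc, ← map_sub] at h2
      exact inner_self_eq_zero.mp h2
    have := hinj _ hxy
    exact Subtype.ext (sub_eq_zero.mp this)
  constructor
  · -- existence and uniqueness
    set W : Submodule ℝ V := Uh.map T with hW
    haveI : FiniteDimensional ℝ W := Module.Finite.map Uh T
    set p : W := Submodule.orthogonalProjectionOnto W (T u) with hp
    obtain ⟨x0, hx0mem, hx0⟩ := p.2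
    have hsol : ∀ wh : Uh, ⟪T u - T ((⟨x0, hx0mem⟩ : Uh) : U), T wh⟫_ℝ = 0 := by
      intro wh
      have hmem : T u - (p : V) ∈ Wᗮ := Submodule.sub_starProjection_mem_orthogonal (K := W) (T u)
      have hTwh : T (wh : U) ∈ W := ⟨wh, wh.2, rfl⟩
      have h3 := (Submodule.mem_orthogonal W _).mp hmem _ hTwh
      have hT0 : T ((⟨x0, hx0mem⟩ : Uh) : U) = (p : V) := hx0
      rw [hT0, real_inner_comm]
      exact h3
    refine ⟨⟨x0, hx0mem⟩, (hkey ⟨x0, hx0mem⟩).mpr hsol, ?_⟩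
    intro y hy
    exact huniq y ⟨x0, hx0mem⟩ ((hkey y).mp hy) hsol
  · -- quasi-optimality
    intro uh huh
    have horth := (hkey uh).mp huh
    -- pointwise bound: for every wh, γ ‖u - uh‖ ≤ M ‖u - wh‖
    have hpt : ∀ wh : Uh, γ * ‖u - (uh : U)‖ ≤ M * ‖u - (wh : U)‖ := by
      intro wh
      have h1 : γ * ‖u - (uh : U)‖ ≤ ‖T (u - uh)‖ := hlow _
      have h2 : ‖T (u - uh)‖ ≤ ‖T (u - wh)‖ := by
        rcases eq_or_ne (T (u - (uh : U))) 0 with h0 | h0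
        · rw [h0, norm_zero]; exact norm_nonneg _
        · have hposn : (0 : ℝ) < ‖T (u - (uh : U))‖ := norm_pos_iff.mpr h0
          have hz : ⟪T u - T (uh : U), T ((wh - uh : Uh) : U)⟫_ℝ = 0 := horth (wh - uh)
          have hc : ((wh - uh : Uh) : U) = (wh : U) - (uh : U) := rfl
          rw [hc] at hz
          have hz' : ⟪T (u - (uh : U)), T ((wh : U) - (uh : U))⟫_ℝ = 0 := by
            rw [map_sub]; exact hz
          have hI : ⟪T (u - (uh : U)), T (u - (uh : U))⟫_ℝ
              = ⟪T (u - (uh : U)), T (u - (wh : U))⟫_ℝ := by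
            have hsplit : T (u - (wh : U)) = T (u - (uh : U)) - T ((wh : U) - (uh : U)) := by
              rw [map_sub, map_sub, map_sub]; abel
            rw [hsplit, inner_sub_right, hz', sub_zero]
          have h4 : ‖T (u - (uh : U))‖ * ‖T (u - (uh : U))‖
              ≤ ‖T (u - (uh : U))‖ * ‖T (u - (wh : U))‖ := by
            rw [← real_inner_self_eq_norm_mul_norm, hI]
            exact real_inner_le_norm _ _
          exact le_of_mul_le_mul_left h4 hposn
      have h3 : ‖T (u - (wh : U))‖ ≤ M * ‖u - (wh : U)‖ := hup _
      linarith
    by_cases htriv : ∀ x : U, x = 0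
    · have h1 : u - (uh : U) = 0 := htriv _
      have h2 : (⨅ wh : Uh, ‖u - (wh : U)‖) = 0 := by
        have hall : ∀ wh : Uh, ‖u - (wh : U)‖ = 0 := fun wh => by
          rw [htriv (u - wh), norm_zero]
        simp only [hall]
        exact ciInf_const
      rw [h1, norm_zero, h2, mul_zero]
    · push_neg at htriv
      obtain ⟨x, hx⟩ := htriv
      have hxpos : (0 : ℝ) < ‖x‖ := norm_pos_iff.mpr hx
      have hγM : γ ≤ M := by nlinarith [hlow x, hup x]
      have hMγ : (0 : ℝ) ≤ M / γ := div_nonneg (by linarith) hγ.le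
      rw [Real.mul_iInf_of_nonneg hMγ]
      refine le_ciInf fun wh => ?_
      have h5 := hpt wh
      rw [div_mul_eq_mul_div, le_div_iff₀ hγ, mul_comm ‖u - (uh : U)‖ γ]
      exact h5
end

section
/- (Fortin operator implies discrete inf-sup.) Assume b satisfies the inf-sup condition with constant γ > 0 and that there is a Fortin operator Π_F : V → V_h with constant C_F for the subspace U_h. Then the discrete inf-sup condition holds: (γ/C_F)·‖u_h‖_U ≤ sup_{0≠v_h∈V_h} b(u_h, v_h)/‖v_h‖_V for all u_h ∈ U_h. -/
open scoped InnerProductSpace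

/-- a Fortin operator implies the discrete inf-sup condition. -/
theorem statement3
    {U V : Type*} [NormedAddCommGroup U] [InnerProductSpace ℝ U] [CompleteSpace U]
    [NormedAddCommGroup V] [InnerProductSpace ℝ V] [CompleteSpace V]
    (b : U →L[ℝ] V →L[ℝ] ℝ) (M γ : ℝ)
    (hM : ∀ (u : U) (v : V), |b u v| ≤ M * ‖u‖ * ‖v‖)
    (hγ : 0 < γ)
    (hinfsup : ∀ u : U, γ * ‖u‖ ≤ ⨆ v : {v : V // v ≠ 0}, b u v.1 / ‖v.1‖)
    (Uh : Submodule ℝ U) (Vh : Submodule ℝ V) (hVh : IsClosed (Vh : Set V))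
    (PiF : V →ₗ[ℝ] V) (hPiFmem : ∀ v : V, PiF v ∈ Vh)
    (CF : ℝ) (hCF : 0 < CF)
    (hPiFbdd : ∀ v : V, ‖PiF v‖ ≤ CF * ‖v‖)
    (hFortin : ∀ uh ∈ Uh, ∀ v : V, b uh (PiF v) = b uh v) :
    ∀ uh : Uh, γ / CF * ‖(uh : U)‖ ≤
      ⨆ vh : {vh : Vh // vh ≠ 0}, b uh (vh.1 : V) / ‖(vh.1 : V)‖ := by
  intro uh
  set S := ⨆ vh : {vh : Vh // vh ≠ 0}, b uh (vh.1 : V) / ‖(vh.1 : V)‖ with hS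
  have hbdd : BddAbove (Set.range fun vh : {vh : Vh // vh ≠ 0} =>
      b uh (vh.1 : V) / ‖(vh.1 : V)‖) := by
    refine ⟨M * ‖(uh : U)‖, ?_⟩
    rintro x ⟨vh, rfl⟩
    have hne : ((vh.1 : V)) ≠ 0 := by
      simpa [Submodule.coe_eq_zero] using vh.2
    have hpos : (0:ℝ) < ‖(vh.1 : V)‖ := norm_pos_iff.mpr hne
    rw [div_le_iff₀ hpos]
    exact le_trans (le_abs_self _) (hM _ _)
  have hSnn : 0 ≤ S := by
    by_cases hne : Nonempty {vh : Vh // vh ≠ 0}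
    · obtain ⟨v0⟩ := hne
      have h1 := le_ciSup hbdd v0
      have h2 := le_ciSup hbdd ⟨-v0.1, neg_ne_zero.mpr v0.2⟩
      simp only [Submodule.coe_neg, map_neg, norm_neg, neg_div] at h2
      linarith
    · haveI := not_nonempty_iff.mp hne
      rw [hS, iSup, Set.range_eq_empty, Real.sSup_empty]
  have key : ∀ v : V, b uh (PiF v) ≤ S * ‖PiF v‖ := by
    intro v
    by_cases h0 : PiF v = 0
    · simp [h0]
    · have hne : (⟨PiF v, hPiFmem v⟩ : Vh) ≠ 0 := by
        simpa [Submodule.mk_eq_zero] using h0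
      have hle := le_ciSup hbdd ⟨⟨PiF v, hPiFmem v⟩, hne⟩
      have hpos : (0:ℝ) < ‖PiF v‖ := norm_pos_iff.mpr h0
      calc b uh (PiF v) = (b uh (PiF v) / ‖PiF v‖) * ‖PiF v‖ := by field_simp
        _ ≤ S * ‖PiF v‖ := mul_le_mul_of_nonneg_right hle hpos.le
  have main : γ * ‖(uh : U)‖ ≤ CF * S := by
    by_cases hne : Nonempty {v : V // v ≠ 0}
    · refine le_trans (hinfsup uh) (ciSup_le fun v => ?_)
      have hvne : (v.1 : V) ≠ 0 := v.2
      have hpos : (0:ℝ) < ‖(v.1 : V)‖ := norm_pos_iff.mpr hvne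
      rw [div_le_iff₀ hpos]
      calc b uh v.1 = b uh (PiF v.1) := (hFortin uh uh.2 v.1).symm
        _ ≤ S * ‖PiF v.1‖ := key v.1
        _ ≤ S * (CF * ‖(v.1 : V)‖) := mul_le_mul_of_nonneg_left (hPiFbdd v.1) hSnn
        _ = CF * S * ‖(v.1 : V)‖ := by ring
    · have h0 := hinfsup uh
      haveI := not_nonempty_iff.mp hne
      rw [iSup, Set.range_eq_empty, Real.sSup_empty] at h0
      have : ‖(uh : U)‖ ≤ 0 := by nlinarith
      nlinarith [norm_nonneg (uh : U)]
  rw [div_mul_eq_mul_div, div_le_iff₀ hCF]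
  linarith [main, mul_comm S CF]
end

section
/- (Fully discrete DPG method.) Assume b is bounded with constant M and satisfies the inf-sup condition with constant γ > 0. Let U_h ⊆ U be a finite-dimensional subspace, V_h ⊆ V a closed subspace, and assume a Fortin operator Π_F : V → V_h with constant C_F exists. Let F ∈ V' and let u ∈ U satisfy b(u, v) = F(v) for all v ∈ V. Then there exists a unique u_h ∈ U_h such that b(u_h, Θ_h w_h) = F(Θ_h w_h) for all w_h ∈ U_h, and ‖u − u_h‖_U ≤ (1 + M·C_F/γ)·inf_{w_h ∈ U_h} ‖u − w_h‖_U. -/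
open scoped InnerProductSpace

/-- the fully discrete DPG method is well posed and quasi-optimal. -/
theorem statement4
    {U V : Type*} [NormedAddCommGroup U] [InnerProductSpace ℝ U] [CompleteSpace U]
    [NormedAddCommGroup V] [InnerProductSpace ℝ V] [CompleteSpace V]
    (b : U →L[ℝ] V →L[ℝ] ℝ) (M γ : ℝ)
    (hM : ∀ (u : U) (v : V), |b u v| ≤ M * ‖u‖ * ‖v‖)
    (hγ : 0 < γ)
    (hinfsup : ∀ u : U, γ * ‖u‖ ≤ ⨆ v : {v : V // v ≠ 0}, b u v.1 / ‖v.1‖)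
    (Uh : Submodule ℝ U) [FiniteDimensional ℝ Uh]
    (Vh : Submodule ℝ V) (hVh : IsClosed (Vh : Set V))
    (PiF : V →ₗ[ℝ] V) (hPiFmem : ∀ v : V, PiF v ∈ Vh)
    (CF : ℝ) (hCF : 0 < CF)
    (hPiFbdd : ∀ v : V, ‖PiF v‖ ≤ CF * ‖v‖)
    (hFortin : ∀ uh ∈ Uh, ∀ v : V, b uh (PiF v) = b uh v)
    (Θh : Uh → V) (hΘhmem : ∀ uh : Uh, Θh uh ∈ Vh)
    (hΘh : ∀ (uh : Uh), ∀ vh ∈ Vh, ⟪Θh uh, vh⟫_ℝ = b uh vh)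
    (F : V →L[ℝ] ℝ) (u : U) (hu : ∀ v : V, b u v = F v) :
    (∃! uh : Uh, ∀ wh : Uh, b uh (Θh wh) = F (Θh wh)) ∧
    (∀ uh : Uh, (∀ wh : Uh, b uh (Θh wh) = F (Θh wh)) →
      ‖u - uh‖ ≤ (1 + M * CF / γ) * ⨅ wh : Uh, ‖u - (wh : U)‖) := by
  classical
  -- discrete inf-sup
  have hinj0 : ∀ zh : Uh, γ * ‖(zh : U)‖ ≤ CF * ‖Θh zh‖ := by
    intro zh
    refine (hinfsup zh).trans (Real.iSup_le ?_ (by positivity))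
    rintro ⟨v, hv⟩
    have hv' : (0:ℝ) < ‖v‖ := norm_pos_iff.mpr hv
    rw [div_le_iff₀ hv']
    calc b (zh : U) v = b (zh : U) (PiF v) := (hFortin _ zh.2 v).symm
      _ = ⟪Θh zh, PiF v⟫_ℝ := (hΘh zh _ (hPiFmem v)).symm
      _ ≤ |⟪Θh zh, PiF v⟫_ℝ| := le_abs_self _
      _ ≤ ‖Θh zh‖ * ‖PiF v‖ := abs_real_inner_le_norm _ _
      _ ≤ ‖Θh zh‖ * (CF * ‖v‖) :=
          mul_le_mul_of_nonneg_left (hPiFbdd v) (norm_nonneg _)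
      _ = CF * ‖Θh zh‖ * ‖v‖ := by ring
  have hΘ0 : ∀ zh : Uh, Θh zh = 0 → zh = 0 := by
    intro zh h
    have h1 := hinj0 zh
    rw [h, norm_zero, mul_zero] at h1
    have h2 : ‖(zh : U)‖ = 0 := by
      have := norm_nonneg (zh : U)
      nlinarith
    have : (zh : U) = 0 := norm_eq_zero.mp h2
    exact Subtype.ext this
  -- if b zh (Θh wh) = 0 for all wh then zh = 0
  have hsolinj : ∀ zh : Uh, (∀ wh : Uh, b (zh : U) (Θh wh) = 0) → zh = 0 := by
    intro zh h
    have : ⟪Θh zh, Θh zh⟫_ℝ = 0 := by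
      rw [hΘh zh _ (hΘhmem zh)]; exact h zh
    exact hΘ0 zh (inner_self_eq_zero.mp this)
  -- linearity of Θh
  have hdet : ∀ y : V, y ∈ Vh → (∀ vh ∈ Vh, ⟪y, vh⟫_ℝ = 0) → y = 0 := by
    intro y hy h
    exact inner_self_eq_zero.mp (h y hy)
  have hadd : ∀ a c : Uh, Θh (a + c) = Θh a + Θh c := by
    intro a c
    have hmem : Θh (a + c) - (Θh a + Θh c) ∈ Vh :=
      Vh.sub_mem (hΘhmem _) (Vh.add_mem (hΘhmem _) (hΘhmem _))
    have h0 : ∀ vh ∈ Vh, ⟪Θh (a + c) - (Θh a + Θh c), vh⟫_ℝ = 0 := by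
      intro vh hvh
      rw [inner_sub_left, inner_add_left, hΘh _ _ hvh, hΘh _ _ hvh, hΘh _ _ hvh]
      have : ((a + c : Uh) : U) = (a : U) + (c : U) := rfl
      rw [this, map_add]
      simp
    have := hdet _ hmem h0
    exact sub_eq_zero.mp this
  have hsmul : ∀ (r : ℝ) (a : Uh), Θh (r • a) = r • Θh a := by
    intro r a
    have hmem : Θh (r • a) - r • Θh a ∈ Vh :=
      Vh.sub_mem (hΘhmem _) (Vh.smul_mem r (hΘhmem _))
    have h0 : ∀ vh ∈ Vh, ⟪Θh (r • a) - r • Θh a, vh⟫_ℝ = 0 := by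
      intro vh hvh
      rw [inner_sub_left, real_inner_smul_left, hΘh _ _ hvh, hΘh _ _ hvh]
      have : ((r • a : Uh) : U) = r • (a : U) := rfl
      rw [this, map_smul]
      simp
    have := hdet _ hmem h0
    exact sub_eq_zero.mp this
  set L : Uh →ₗ[ℝ] V :=
    { toFun := Θh, map_add' := hadd, map_smul' := hsmul } with hL
  -- existence
  have hex : ∃ uh : Uh, ∀ wh : Uh, b (uh : U) (Θh wh) = F (Θh wh) := by
    set Wh : Submodule ℝ V := LinearMap.range L with hWh
    haveI : FiniteDimensional ℝ Wh := inferInstance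
    haveI : CompleteSpace Wh := FiniteDimensional.complete ℝ Wh
    set G : Wh →L[ℝ] ℝ := F.comp (Submodule.subtypeL Wh) with hG
    set y0 : Wh := (InnerProductSpace.toDual ℝ Wh).symm G with hy0
    have hy0p : ∀ y : Wh, ⟪y0, y⟫_ℝ = F (y : V) := by
      intro y
      have h1 : ⟪y0, y⟫_ℝ = G y := InnerProductSpace.toDual_symm_apply
      rw [h1, hG]
      rfl
    obtain ⟨uh, huh⟩ : ∃ uh : Uh, L uh = (y0 : V) := y0.2
    refine ⟨uh, fun wh => ?_⟩
    have hmemW : Θh wh ∈ Wh := ⟨wh, rfl⟩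
    have h1 : ⟪Θh uh, Θh wh⟫_ℝ = b (uh : U) (Θh wh) := hΘh uh _ (hΘhmem wh)
    have h2 : ⟪y0, (⟨Θh wh, hmemW⟩ : Wh)⟫_ℝ = F (Θh wh) := hy0p ⟨Θh wh, hmemW⟩
    have h3 : ⟪(y0 : V), Θh wh⟫_ℝ = F (Θh wh) := h2
    have h4 : Θh uh = (y0 : V) := huh
    rw [← h1, h4, h3]
  obtain ⟨uh0, huh0⟩ := hex
  -- uniqueness
  have huniq : ∀ uh1 uh2 : Uh, (∀ wh : Uh, b (uh1 : U) (Θh wh) = F (Θh wh)) →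
      (∀ wh : Uh, b (uh2 : U) (Θh wh) = F (Θh wh)) → uh1 = uh2 := by
    intro uh1 uh2 h1 h2
    have hz : ∀ wh : Uh, b ((uh1 - uh2 : Uh) : U) (Θh wh) = 0 := by
      intro wh
      have : ((uh1 - uh2 : Uh) : U) = (uh1 : U) - (uh2 : U) := rfl
      rw [this, map_sub]
      simp [h1 wh, h2 wh]
    have := hsolinj _ hz
    exact sub_eq_zero.mp this
  constructor
  · exact ⟨uh0, huh0, fun y hy => huniq y uh0 hy huh0⟩
  · -- error estimate
    intro uh hsol
    by_cases hUtriv : ∀ x : U, x = 0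
    · have hz : ∀ wh : Uh, ‖u - (wh : U)‖ = 0 := fun wh => by
        rw [hUtriv (u - (wh : U)), norm_zero]
      have hinf : (⨅ wh : Uh, ‖u - (wh : U)‖) = 0 := by
        have : (fun wh : Uh => ‖u - (wh : U)‖) = fun _ => (0:ℝ) := funext hz
        rw [this, ciInf_const]
      rw [hinf, mul_zero, hUtriv (u - (uh : U)), norm_zero]
    · push_neg at hUtriv
      obtain ⟨x, hx⟩ := hUtriv
      -- M > 0
      have hMpos : 0 < M := by
        have hsup := hinfsup x
        have hxn : 0 < ‖x‖ := norm_pos_iff.mpr hx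
        by_contra hMn
        push_neg at hMn
        have hble : ∀ v : {v : V // v ≠ 0}, b x v.1 / ‖v.1‖ ≤ 0 := by
          rintro ⟨v, hv⟩
          have hv' : (0:ℝ) < ‖v‖ := norm_pos_iff.mpr hv
          have hb : b x v ≤ 0 := by
            have ha := hM x v
            have h2 : M * ‖x‖ * ‖v‖ ≤ 0 := by nlinarith [mul_pos hxn hv']
            have h3 := le_abs_self (b x v)
            linarith
          exact div_nonpos_of_nonpos_of_nonneg hb (norm_nonneg _)
        have := hsup.trans (Real.iSup_le hble le_rfl)
        nlinarith
      -- quasi-optimality for each wh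
      have hper : ∀ wh : Uh, ‖u - (uh : U)‖ ≤ (1 + M * CF / γ) * ‖u - (wh : U)‖ := by
        intro wh
        have hzc : ((wh - uh : Uh) : U) = (wh : U) - (uh : U) := rfl
        -- ‖Θh (wh - uh)‖ ≤ M ‖u - wh‖
        have hTb : ‖Θh (wh - uh)‖ ≤ M * ‖u - (wh : U)‖ := by
          have hsq : ‖Θh (wh - uh)‖ ^ 2 = b ((wh : U) - u) (Θh (wh - uh)) := by
            have h1 : ⟪Θh (wh - uh), Θh (wh - uh)⟫_ℝ = b ((wh - uh : Uh) : U) (Θh (wh - uh)) :=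
              hΘh (wh - uh) _ (hΘhmem (wh - uh))
            have h3 : b (uh : U) (Θh (wh - uh)) = b u (Θh (wh - uh)) := by
              rw [hsol (wh - uh), hu]
            rw [← real_inner_self_eq_norm_sq, h1, hzc, map_sub, map_sub]
            simp only [ContinuousLinearMap.sub_apply]
            rw [h3]
          have habs : b ((wh : U) - u) (Θh (wh - uh)) ≤ M * ‖(wh : U) - u‖ * ‖Θh (wh - uh)‖ :=
            (le_abs_self _).trans (hM _ _)
          rcases eq_or_lt_of_le (norm_nonneg (Θh (wh - uh))) with h0 | h0
          · rw [← h0]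
            positivity
          · have h5 : ‖Θh (wh - uh)‖ ^ 2 ≤ M * ‖(wh : U) - u‖ * ‖Θh (wh - uh)‖ := by
              rw [hsq]; exact habs
            have h4 : ‖Θh (wh - uh)‖ ≤ M * ‖(wh : U) - u‖ := by nlinarith
            rwa [norm_sub_rev] at h4
        have hz2 : γ * ‖(wh : U) - (uh : U)‖ ≤ CF * (M * ‖u - (wh : U)‖) := by
          have h6 := (hinj0 (wh - uh)).trans (mul_le_mul_of_nonneg_left hTb (le_of_lt hCF))
          rwa [hzc] at h6
        have hz3 : ‖(wh : U) - (uh : U)‖ ≤ M * CF / γ * ‖u - (wh : U)‖ := by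
          rw [div_mul_eq_mul_div, le_div_iff₀ hγ]
          nlinarith
        calc ‖u - (uh : U)‖ ≤ ‖u - (wh : U)‖ + ‖(wh : U) - (uh : U)‖ :=
              norm_sub_le_norm_sub_add_norm_sub u (wh : U) (uh : U)
          _ ≤ ‖u - (wh : U)‖ + M * CF / γ * ‖u - (wh : U)‖ := by linarith
          _ = (1 + M * CF / γ) * ‖u - (wh : U)‖ := by ring
      have hc : 0 < 1 + M * CF / γ := by positivity
      have h7 : ‖u - (uh : U)‖ / (1 + M * CF / γ) ≤ ⨅ wh : Uh, ‖u - (wh : U)‖ := by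
        refine le_ciInf fun wh => ?_
        rw [div_le_iff₀ hc]
        exact (hper wh).trans (le_of_eq (mul_comm _ _))
      calc ‖u - (uh : U)‖
          = (1 + M * CF / γ) * (‖u - (uh : U)‖ / (1 + M * CF / γ)) := by
            field_simp
        _ ≤ (1 + M * CF / γ) * ⨅ wh : Uh, ‖u - (wh : U)‖ :=
            mul_le_mul_of_nonneg_left h7 (le_of_lt hc)
end

section
/- (Breaking-spaces inf-sup theorem.) Let U₀, Û, V be real Hilbert spaces, b₀ : U₀ × V → ℝ and b̂ : Û × V → ℝ bounded bilinear forms with |b₀(u₀,v)| ≤ M₀·‖u₀‖·‖v‖, and set V₀ := {v ∈ V : b̂(û, v) = 0 for all û ∈ Û}. Assume: (i) there is c₀ > 0 with c₀·‖u₀‖ ≤ sup_{0≠v∈V₀} b₀(u₀,v)/‖v‖_V for all u₀ ∈ U₀; (ii) if v ∈ V₀ and b₀(u₀, v) = 0 for all u₀ ∈ U₀, then v = 0; (iii) there is ĉ > 0 with ĉ·‖û‖ ≤ sup_{0≠v∈V} b̂(û,v)/‖v‖_V for all û ∈ Û. Define b((u₀,û), v) := b₀(u₀,v) + b̂(û,v)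 on (U₀ × Û) × V. Then there is γ > 0 (depending only on c₀, ĉ, M₀) such that γ·(‖u₀‖² + ‖û‖²)^{1/2} ≤ sup_{0≠v∈V} b((u₀,û), v)/‖v‖_V for all (u₀,û) ∈ U₀ × Û, and moreover if v ∈ V satisfies b((u₀,û), v) = 0 for all (u₀,û) ∈ U₀ × Û then v = 0. -/
open scoped InnerProductSpace

/-- breaking-spaces inf-sup theorem. -/
theorem statement5
    {U₀ Uhat V : Type*}
    [NormedAddCommGroup U₀] [InnerProductSpace ℝ U₀] [CompleteSpace U₀]
    [NormedAddCommGroup Uhat] [InnerProductSpace ℝ Uhat] [CompleteSpace Uhat]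
    [NormedAddCommGroup V] [InnerProductSpace ℝ V] [CompleteSpace V]
    (b₀ : U₀ →L[ℝ] V →L[ℝ] ℝ) (bhat : Uhat →L[ℝ] V →L[ℝ] ℝ)
    (M₀ : ℝ) (hM₀ : ∀ (u₀ : U₀) (v : V), |b₀ u₀ v| ≤ M₀ * ‖u₀‖ * ‖v‖)
    (c₀ : ℝ) (hc₀ : 0 < c₀)
    (hinfsup₀ : ∀ u₀ : U₀, c₀ * ‖u₀‖ ≤
      ⨆ v : {v : V // (∀ uhat : Uhat, bhat uhat v = 0) ∧ v ≠ 0}, b₀ u₀ v.1 / ‖v.1‖)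
    (hinj : ∀ v : V, (∀ uhat : Uhat, bhat uhat v = 0) →
      (∀ u₀ : U₀, b₀ u₀ v = 0) → v = 0)
    (chat : ℝ) (hchat : 0 < chat)
    (hinfsuphat : ∀ uhat : Uhat, chat * ‖uhat‖ ≤
      ⨆ v : {v : V // v ≠ 0}, bhat uhat v.1 / ‖v.1‖) :
    ∃ γ > (0 : ℝ),
      (∀ (u₀ : U₀) (uhat : Uhat),
        γ * Real.sqrt (‖u₀‖ ^ 2 + ‖uhat‖ ^ 2) ≤
          ⨆ v : {v : V // v ≠ 0}, (b₀ u₀ v.1 + bhat uhat v.1) / ‖v.1‖) ∧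
      (∀ v : V, (∀ (u₀ : U₀) (uhat : Uhat), b₀ u₀ v + bhat uhat v = 0) → v = 0) := by
  classical
  set M : ℝ := max M₀ 0 with hMdef
  have hMnn : 0 ≤ M := le_max_right _ _
  have hM : ∀ (u₀ : U₀) (v : V), |b₀ u₀ v| ≤ M * ‖u₀‖ * ‖v‖ := by
    intro u₀ v
    refine (hM₀ u₀ v).trans ?_
    have : M₀ ≤ M := le_max_left _ _
    have h1 : (0:ℝ) ≤ ‖u₀‖ * ‖v‖ := by positivity
    nlinarith
  -- the combined sup
  set S : U₀ → Uhat → ℝ := fun u₀ uhat =>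
    ⨆ v : {v : V // v ≠ 0}, (b₀ u₀ v.1 + bhat uhat v.1) / ‖v.1‖ with hSdef
  have hbdd : ∀ (u₀ : U₀) (uhat : Uhat),
      BddAbove (Set.range fun v : {v : V // v ≠ 0} =>
        (b₀ u₀ v.1 + bhat uhat v.1) / ‖v.1‖) := by
    intro u₀ uhat
    refine ⟨‖b₀ u₀‖ + ‖bhat uhat‖, ?_⟩
    rintro _ ⟨v, rfl⟩
    have hv : (0:ℝ) < ‖v.1‖ := norm_pos_iff.mpr v.2
    rw [div_le_iff₀ hv]
    have h1 : b₀ u₀ v.1 ≤ ‖b₀ u₀‖ * ‖v.1‖ :=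
      (le_abs_self _).trans ((b₀ u₀).le_opNorm v.1)
    have h2 : bhat uhat v.1 ≤ ‖bhat uhat‖ * ‖v.1‖ :=
      (le_abs_self _).trans ((bhat uhat).le_opNorm v.1)
    nlinarith
  have hle : ∀ (u₀ : U₀) (uhat : Uhat) (v : {v : V // v ≠ 0}),
      (b₀ u₀ v.1 + bhat uhat v.1) / ‖v.1‖ ≤ S u₀ uhat := by
    intro u₀ uhat v
    exact le_ciSup (hbdd u₀ uhat) v
  have hSnn : ∀ (u₀ : U₀) (uhat : Uhat), 0 ≤ S u₀ uhat := by
    intro u₀ uhat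
    by_cases h : Nonempty {v : V // v ≠ 0}
    · obtain ⟨v⟩ := h
      have h1 := hle u₀ uhat v
      have h2 := hle u₀ uhat ⟨-v.1, neg_ne_zero.mpr v.2⟩
      simp only [map_neg, norm_neg] at h2
      have : (-(b₀ u₀ v.1) + -(bhat uhat v.1)) / ‖v.1‖
          = -((b₀ u₀ v.1 + bhat uhat v.1) / ‖v.1‖) := by ring
      rw [this] at h2
      linarith
    · simp only [not_nonempty_iff] at h
      rw [hSdef]
      beta_reduce
      rw [Real.iSup_of_isEmpty]
  -- Step 1: c₀ * ‖u₀‖ ≤ S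
  have h1 : ∀ (u₀ : U₀) (uhat : Uhat), c₀ * ‖u₀‖ ≤ S u₀ uhat := by
    intro u₀ uhat
    refine (hinfsup₀ u₀).trans (Real.iSup_le ?_ (hSnn u₀ uhat))
    intro v
    have : b₀ u₀ v.1 / ‖v.1‖ = (b₀ u₀ v.1 + bhat uhat v.1) / ‖v.1‖ := by
      rw [v.2.1 uhat, add_zero]
    rw [this]
    exact hle u₀ uhat ⟨v.1, v.2.2⟩
  -- Step 2: chat * ‖uhat‖ ≤ S + M * ‖u₀‖
  have h2 : ∀ (u₀ : U₀) (uhat : Uhat),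
      chat * ‖uhat‖ ≤ S u₀ uhat + M * ‖u₀‖ := by
    intro u₀ uhat
    refine (hinfsuphat uhat).trans (Real.iSup_le ?_ ?_)
    · intro v
      have hv : (0:ℝ) < ‖v.1‖ := norm_pos_iff.mpr v.2
      have key : bhat uhat v.1 / ‖v.1‖
          = (b₀ u₀ v.1 + bhat uhat v.1) / ‖v.1‖ - b₀ u₀ v.1 / ‖v.1‖ := by ring
      have habs : -(M * ‖u₀‖) ≤ b₀ u₀ v.1 / ‖v.1‖ := by
        rw [le_div_iff₀ hv]
        have := (abs_le.mp (hM u₀ v.1)).1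
        nlinarith
      have := hle u₀ uhat v
      rw [key]
      linarith
    · have := hSnn u₀ uhat
      positivity
  -- choose gamma
  have hD : (0:ℝ) < c₀ + chat + M := by linarith
  refine ⟨c₀ * chat / (c₀ + chat + M), by positivity, ?_, ?_⟩
  · intro u₀ uhat
    set a := ‖u₀‖
    set b := ‖uhat‖
    have hann : 0 ≤ a := norm_nonneg _
    have hbnn : 0 ≤ b := norm_nonneg _
    have hsqrt : Real.sqrt (a ^ 2 + b ^ 2) ≤ a + b := by
      rw [show a + b = Real.sqrt ((a + b) ^ 2) from
        (Real.sqrt_sq (by positivity)).symm]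
      exact Real.sqrt_le_sqrt (by nlinarith)
    have hs := hSnn u₀ uhat
    have h1' := h1 u₀ uhat
    have h2' := h2 u₀ uhat
    have hsum : c₀ * chat * (a + b) ≤ (c₀ + chat + M) * S u₀ uhat := by
      have k1 : chat * (c₀ * a) ≤ chat * S u₀ uhat :=
        mul_le_mul_of_nonneg_left h1' hchat.le
      have k2 : c₀ * (chat * b) ≤ c₀ * (S u₀ uhat + M * a) :=
        mul_le_mul_of_nonneg_left h2' hc₀.le
      have k3 : M * (c₀ * a) ≤ M * S u₀ uhat :=
        mul_le_mul_of_nonneg_left h1' hMnn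
      nlinarith
    calc c₀ * chat / (c₀ + chat + M) * Real.sqrt (a ^ 2 + b ^ 2)
        ≤ c₀ * chat / (c₀ + chat + M) * (a + b) := by
          apply mul_le_mul_of_nonneg_left hsqrt (by positivity)
      _ ≤ S u₀ uhat := by
          rw [div_mul_eq_mul_div, div_le_iff₀ hD]
          nlinarith
  · intro v hv
    have hb : ∀ uhat : Uhat, bhat uhat v = 0 := by
      intro uhat
      have := hv 0 uhat
      simpa using this
    have h0 : ∀ u₀ : U₀, b₀ u₀ v = 0 := by
      intro u₀
      have := hv u₀ 0
      simpa using this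
    exact hinj v hb h0
end

section
/- (Abstract a posteriori reliability.) Assume b satisfies the inf-sup condition with constant γ > 0 and that there is a Fortin operator Π_F : V → V_h with constant C_F for the subspace U_h. Let F ∈ V', let u ∈ U satisfy b(u, v) = F(v) for all v ∈ V, and let u_h ∈ U_h be arbitrary. Define the discrete residual η := sup_{0≠v_h∈V_h} |F(v_h) − b(u_h, v_h)|/‖v_h‖_V and the oscillation osc(F) := sup_{0≠v∈V} |F(v − Π_F v)|/‖v‖_V. Then ‖u − u_h‖_U ≤ γ^{-1}·(C_F·η + osc(F)). -/
open scoped InnerProductSpace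

/-- abstract a posteriori reliability. -/
theorem statement8
    {U V : Type*} [NormedAddCommGroup U] [InnerProductSpace ℝ U] [CompleteSpace U]
    [NormedAddCommGroup V] [InnerProductSpace ℝ V] [CompleteSpace V]
    (b : U →L[ℝ] V →L[ℝ] ℝ) (M γ : ℝ)
    (hM : ∀ (u : U) (v : V), |b u v| ≤ M * ‖u‖ * ‖v‖)
    (hγ : 0 < γ)
    (hinfsup : ∀ u : U, γ * ‖u‖ ≤ ⨆ v : {v : V // v ≠ 0}, b u v.1 / ‖v.1‖)
    (Uh : Submodule ℝ U) (Vh : Submodule ℝ V) (hVh : IsClosed (Vh : Set V))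
    (PiF : V →ₗ[ℝ] V) (hPiFmem : ∀ v : V, PiF v ∈ Vh)
    (CF : ℝ)
    (hPiFbdd : ∀ v : V, ‖PiF v‖ ≤ CF * ‖v‖)
    (hFortin : ∀ uh ∈ Uh, ∀ v : V, b uh (PiF v) = b uh v)
    (F : V →L[ℝ] ℝ) (u : U) (hu : ∀ v : V, b u v = F v)
    (uh : U) (huh : uh ∈ Uh)
    (η osc : ℝ)
    (hη : η = ⨆ vh : {vh : Vh // vh ≠ 0}, |F (vh.1 : V) - b uh (vh.1 : V)| / ‖(vh.1 : V)‖)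
    (hosc : osc = ⨆ v : {v : V // v ≠ 0}, |F (v.1 - PiF v.1)| / ‖v.1‖) :
    ‖u - uh‖ ≤ γ⁻¹ * (CF * η + osc) := by
  have key : γ * ‖u - uh‖ ≤ CF * η + osc := by
    refine le_trans (hinfsup (u - uh)) ?_
    by_cases hne : Nonempty {v : V // v ≠ 0}
    · haveI := hne
      obtain ⟨v0⟩ := hne
      have hCF : 0 ≤ CF := by
        have h1 := hPiFbdd v0.1
        have h2 : 0 < ‖v0.1‖ := norm_pos_iff.mpr v0.2
        nlinarith [norm_nonneg (PiF v0.1)]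
      have hη0 : 0 ≤ η := by
        rw [hη]
        exact Real.iSup_nonneg fun vh => div_nonneg (abs_nonneg _) (norm_nonneg _)
      have hoscBdd : BddAbove (Set.range fun v : {v : V // v ≠ 0} =>
          |F (v.1 - PiF v.1)| / ‖v.1‖) := by
        refine ⟨‖F‖ * (1 + CF), ?_⟩
        rintro x ⟨v, rfl⟩
        have hv : 0 < ‖v.1‖ := norm_pos_iff.mpr v.2
        rw [div_le_iff₀ hv]
        calc |F (v.1 - PiF v.1)| ≤ ‖F‖ * ‖v.1 - PiF v.1‖ := F.le_opNorm _
          _ ≤ ‖F‖ * (‖v.1‖ + CF * ‖v.1‖) := by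
              have h3 := norm_sub_le v.1 (PiF v.1)
              have h4 := hPiFbdd v.1
              nlinarith [norm_nonneg (F : V →L[ℝ] ℝ)]
          _ = ‖F‖ * (1 + CF) * ‖v.1‖ := by ring
      have hηBdd : BddAbove (Set.range fun vh : {vh : Vh // vh ≠ 0} =>
          |F (vh.1 : V) - b uh (vh.1 : V)| / ‖(vh.1 : V)‖) := by
        refine ⟨‖F‖ + ‖b uh‖, ?_⟩
        rintro x ⟨vh, rfl⟩
        have hvh : (vh.1 : V) ≠ 0 := by
          simpa using vh.2
        have hv : 0 < ‖(vh.1 : V)‖ := norm_pos_iff.mpr hvh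
        rw [div_le_iff₀ hv]
        calc |F (vh.1 : V) - b uh (vh.1 : V)|
            ≤ |F (vh.1 : V)| + |b uh (vh.1 : V)| := abs_sub _ _
          _ ≤ ‖F‖ * ‖(vh.1 : V)‖ + ‖b uh‖ * ‖(vh.1 : V)‖ :=
              add_le_add (F.le_opNorm _) ((b uh).le_opNorm _)
          _ = (‖F‖ + ‖b uh‖) * ‖(vh.1 : V)‖ := by ring
      refine ciSup_le fun v => ?_
      have hv : 0 < ‖v.1‖ := norm_pos_iff.mpr v.2
      rw [div_le_iff₀ hv]
      have hb : b (u - uh) v.1 = F (v.1 - PiF v.1) + (F (PiF v.1) - b uh (PiF v.1)) := by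
        have h1 : b uh v.1 = b uh (PiF v.1) := (hFortin uh huh v.1).symm
        have h2 : b (u - uh) v.1 = b u v.1 - b uh v.1 := by simp [map_sub]
        rw [h2, hu, h1, map_sub]
        ring
      have hosc_le : |F (v.1 - PiF v.1)| ≤ osc * ‖v.1‖ := by
        have h5 := le_ciSup hoscBdd v
        rw [← hosc] at h5
        exact (div_le_iff₀ hv).mp h5
      have hterm2 : |F (PiF v.1) - b uh (PiF v.1)| ≤ CF * η * ‖v.1‖ := by
        by_cases hp : PiF v.1 = 0
        · simp only [hp, map_zero, sub_zero, abs_zero]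
          positivity
        · have hpn : 0 < ‖PiF v.1‖ := norm_pos_iff.mpr hp
          have hw : (⟨PiF v.1, hPiFmem v.1⟩ : Vh) ≠ 0 := by
            simpa using hp
          have h5 := le_ciSup hηBdd (⟨⟨PiF v.1, hPiFmem v.1⟩, hw⟩ : {vh : Vh // vh ≠ 0})
          rw [← hη] at h5
          have h6 : |F (PiF v.1) - b uh (PiF v.1)| ≤ η * ‖PiF v.1‖ :=
            (div_le_iff₀ hpn).mp h5
          have h7 := hPiFbdd v.1
          nlinarith
      calc b (u - uh) v.1 ≤ |b (u - uh) v.1| := le_abs_self _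
        _ = |F (v.1 - PiF v.1) + (F (PiF v.1) - b uh (PiF v.1))| := by rw [hb]
        _ ≤ |F (v.1 - PiF v.1)| + |F (PiF v.1) - b uh (PiF v.1)| := abs_add_le _ _
        _ ≤ osc * ‖v.1‖ + CF * η * ‖v.1‖ := add_le_add hosc_le hterm2
        _ = (CF * η + osc) * ‖v.1‖ := by ring
    · have hE : IsEmpty {v : V // v ≠ 0} := not_nonempty_iff.mp hne
      have hall : ∀ v : V, v = 0 := fun v => by
        by_contra h
        exact hne ⟨⟨v, h⟩⟩
      have hE2 : IsEmpty {vh : Vh // vh ≠ 0} := by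
        constructor
        rintro ⟨vh, hvh⟩
        exact hvh (by ext; exact hall _)
      rw [Real.iSup_of_isEmpty, hη, hosc, Real.iSup_of_isEmpty, Real.iSup_of_isEmpty]
      norm_num
  calc ‖u - uh‖ = γ⁻¹ * (γ * ‖u - uh‖) := by field_simp
    _ ≤ γ⁻¹ * (CF * η + osc) := by
        apply mul_le_mul_of_nonneg_left key
        positivity
end

section
/- (Ellipticity implies the Cordes condition in two dimensions.) Let A be a real symmetric 2×2 matrix and let 0 < λ ≤ Λ be such that λ·|x|² ≤ xᵀAx ≤ Λ·|x|² for all x ∈ ℝ². Then, with ε := 2λΛ/(λ² + Λ²), one has ε ∈ (0, 1] and A satisfies the Cordes condition with parameter ε, i.e. ‖A‖_F² ≤ (tr A)²/(1 + ε). -/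
open Matrix
open scoped BigOperators

/-- uniform ellipticity implies the Cordes condition in two
dimensions, with `ε = 2λΛ/(λ² + Λ²)`. -/
theorem statement10
    (A : Matrix (Fin 2) (Fin 2) ℝ) (hA : A.IsSymm)
    (lam Lam : ℝ) (hlam : 0 < lam) (hlamLam : lam ≤ Lam)
    (hlow : ∀ x : Fin 2 → ℝ, lam * (x ⬝ᵥ x) ≤ x ⬝ᵥ A.mulVec x)
    (hhigh : ∀ x : Fin 2 → ℝ, x ⬝ᵥ A.mulVec x ≤ Lam * (x ⬝ᵥ x)) :
    0 < 2 * lam * Lam / (lam ^ 2 + Lam ^ 2) ∧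
    2 * lam * Lam / (lam ^ 2 + Lam ^ 2) ≤ 1 ∧
    (∑ j : Fin 2, ∑ k : Fin 2, A j k ^ 2) ≤
      A.trace ^ 2 / (1 + 2 * lam * Lam / (lam ^ 2 + Lam ^ 2)) := by
  have hLam : 0 < Lam := lt_of_lt_of_le hlam hlamLam
  set a : ℝ := A 0 0 with ha
  set b : ℝ := A 0 1 with hb
  set c : ℝ := A 1 1 with hc
  have hsymm : A 1 0 = b := hA.apply 1 0 ▸ rfl
  -- quadratic form evaluation
  have hq : ∀ u v : ℝ, (![u, v] : Fin 2 → ℝ) ⬝ᵥ A.mulVec ![u, v]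
      = a * u * u + 2 * b * u * v + c * v * v := by
    intro u v
    simp [dotProduct, Matrix.mulVec, Fin.sum_univ_two, hsymm, ← ha, ← hb, ← hc]
    ring
  have hd : ∀ u v : ℝ, (![u, v] : Fin 2 → ℝ) ⬝ᵥ (![u, v] : Fin 2 → ℝ) = u * u + v * v := by
    intro u v; simp [dotProduct, Fin.sum_univ_two]
  have hlow' : ∀ u v : ℝ, lam * (u * u + v * v) ≤ a * u * u + 2 * b * u * v + c * v * v := by
    intro u v; have := hlow ![u, v]; rwa [hq, hd] at this
  have hhigh' : ∀ u v : ℝ, a * u * u + 2 * b * u * v + c * v * v ≤ Lam * (u * u + v * v) := by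
    intro u v; have := hhigh ![u, v]; rwa [hq, hd] at this
  -- entry bounds
  have ha1 : lam ≤ a := by have := hlow' 1 0; linarith
  have ha2 : a ≤ Lam := by have := hhigh' 1 0; linarith
  have hc1 : lam ≤ c := by have := hlow' 0 1; linarith
  have hc2 : c ≤ Lam := by have := hhigh' 0 1; linarith
  -- determinant-type bounds via discriminant
  have hP : b ^ 2 ≤ (a - lam) * (c - lam) := by
    have h := discrim_le_zero (a := a - lam) (b := 2 * b) (c := c - lam)
      (fun t => by have := hlow' t 1; nlinarith)
    rw [discrim] at h; nlinarith
  have hQ : b ^ 2 ≤ (Lam - a) * (Lam - c) := by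
    have h := discrim_le_zero (a := Lam - a) (b := -(2 * b)) (c := Lam - c)
      (fun t => by have := hhigh' t 1; nlinarith)
    rw [discrim] at h; nlinarith
  -- bracket inequality: 2 b² ≤ (a-λ)(Λ-a) + (c-λ)(Λ-c)
  have hX : 0 ≤ (a - lam) * (Lam - a) := mul_nonneg (by linarith) (by linarith)
  have hY : 0 ≤ (c - lam) * (Lam - c) := mul_nonneg (by linarith) (by linarith)
  have hPQ : b ^ 2 * b ^ 2 ≤ ((a - lam) * (c - lam)) * ((Lam - a) * (Lam - c)) :=
    mul_le_mul hP hQ (sq_nonneg b) (le_trans (sq_nonneg b) hP)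
  have hbracket : 2 * b ^ 2 ≤ (a - lam) * (Lam - a) + (c - lam) * (Lam - c) := by
    nlinarith [sq_nonneg ((a - lam) * (Lam - a) - (c - lam) * (Lam - c)), hPQ, hX, hY,
      sq_nonneg b]
  -- key polynomial inequality
  have t1 : 0 ≤ Lam ^ 2 * ((a - lam) * (c - lam) - b ^ 2) := by nlinarith [sq_nonneg Lam]
  have t2 : 0 ≤ lam ^ 2 * ((Lam - a) * (Lam - c) - b ^ 2) := by nlinarith [sq_nonneg lam]
  have t3 : 0 ≤ lam * Lam * ((a - lam) * (Lam - a) + (c - lam) * (Lam - c) - 2 * b ^ 2) := by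
    have : 0 ≤ lam * Lam := by positivity
    nlinarith
  have key : (a ^ 2 + 2 * b ^ 2 + c ^ 2) * ((lam ^ 2 + Lam ^ 2) + 2 * lam * Lam)
      ≤ (a + c) ^ 2 * (lam ^ 2 + Lam ^ 2) := by linarith [t1, t2, t3]
  have hden : (0 : ℝ) < lam ^ 2 + Lam ^ 2 := by positivity
  refine ⟨by positivity, ?_, ?_⟩
  · rw [div_le_one hden]; nlinarith [sq_nonneg (lam - Lam)]
  · have hsum : (∑ j : Fin 2, ∑ k : Fin 2, A j k ^ 2) = a ^ 2 + 2 * b ^ 2 + c ^ 2 := by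
      simp [Fin.sum_univ_two, hsymm, ← ha, ← hb, ← hc]; ring
    have htr : A.trace = a + c := by
      simp [Matrix.trace, Matrix.diag, Fin.sum_univ_two, ← ha, ← hc]
    rw [hsum, htr]
    rw [le_div_iff₀ (by positivity)]
    have hexp : 1 + 2 * lam * Lam / (lam ^ 2 + Lam ^ 2)
        = ((lam ^ 2 + Lam ^ 2) + 2 * lam * Lam) / (lam ^ 2 + Lam ^ 2) := by
      field_simp
    rw [hexp, ← mul_div_assoc, div_le_iff₀ hden]
    linarith [key]
end

section
/- (Cordes condition bounds the distance of the scaled matrix to the identity.) Let d ≥ 1, let A be a real symmetric d×d matrix with tr A > 0, let ε ∈ (0,1], and assume A satisfies the Cordes condition with parameter ε, i.e. ‖A‖_F² ≤ (tr A)²/(d−1+ε). Set γ := tr A/‖A‖_F². Then ‖γA − I_d‖_F² ≤ 1 − ε, where I_d is the d×d identity matrix. -/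
open Matrix
open scoped BigOperators

/-- the Cordes condition bounds the Frobenius distance of the
scaled matrix `γA` to the identity by `1 - ε`. -/
theorem statement11
    (d : ℕ) (hd : 1 ≤ d)
    (A : Matrix (Fin d) (Fin d) ℝ) (hA : A.IsSymm) (htr : 0 < A.trace)
    (ε : ℝ) (hε0 : 0 < ε) (hε1 : ε ≤ 1)
    (hCordes : (∑ j : Fin d, ∑ k : Fin d, A j k ^ 2) ≤
      A.trace ^ 2 / ((d : ℝ) - 1 + ε))
    (γ : ℝ) (hγ : γ = A.trace / ∑ j : Fin d, ∑ k : Fin d, A j k ^ 2) :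
    (∑ j : Fin d, ∑ k : Fin d, (γ • A - 1) j k ^ 2) ≤ 1 - ε := by
  set S : ℝ := ∑ j : Fin d, ∑ k : Fin d, A j k ^ 2 with hS
  set t : ℝ := A.trace with ht
  have htrsum : t = ∑ j : Fin d, A j j := by
    simp [ht, Matrix.trace, Matrix.diag]
  have hS0 : 0 ≤ S := by
    apply Finset.sum_nonneg; intro j _
    exact Finset.sum_nonneg fun k _ => sq_nonneg _
  have hSpos : 0 < S := by
    rcases lt_or_eq_of_le hS0 with h | h
    · exact h
    · exfalso
      have hall : ∀ j ∈ Finset.univ, ∀ k ∈ Finset.univ, A j k ^ 2 = 0 := by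
        intro j _ k _
        have h1 : ∑ j : Fin d, ∑ k : Fin d, A j k ^ 2 = 0 := h.symm
        have h2 := (Finset.sum_eq_zero_iff_of_nonneg (fun j _ =>
          Finset.sum_nonneg fun k _ => sq_nonneg (A j k))).mp h1 j (Finset.mem_univ j)
        exact (Finset.sum_eq_zero_iff_of_nonneg (fun k _ => sq_nonneg (A j k))).mp h2 k
          (Finset.mem_univ k)
      have : t = 0 := by
        rw [htrsum]
        apply Finset.sum_eq_zero
        intro j _
        have := hall j (Finset.mem_univ j) j (Finset.mem_univ j)
        exact pow_eq_zero_iff (n := 2) (by norm_num) |>.mp this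
      exact htr.ne' this
  -- key identity
  have hrow : ∀ j : Fin d, ∑ k : Fin d, (γ • A - 1) j k ^ 2 =
      γ ^ 2 * (∑ k : Fin d, A j k ^ 2) - 2 * γ * A j j + 1 := by
    intro j
    have hterm : ∀ k : Fin d, (γ • A - 1) j k ^ 2 =
        γ ^ 2 * A j k ^ 2 - 2 * γ * (if k = j then A j k else 0)
          + (if k = j then (1 : ℝ) else 0) := by
      intro k
      simp only [Matrix.sub_apply, Matrix.smul_apply, Matrix.one_apply, smul_eq_mul]
      by_cases hk : j = k
      · subst hk; simp; ring
      · have hk' : ¬ (k = j) := fun h => hk h.symm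
        simp [hk, hk']; ring
    rw [Finset.sum_congr rfl fun k _ => hterm k]
    rw [Finset.sum_add_distrib, Finset.sum_sub_distrib]
    rw [← Finset.mul_sum, ← Finset.mul_sum]
    simp [Finset.sum_ite_eq]
  have hkey : (∑ j : Fin d, ∑ k : Fin d, (γ • A - 1) j k ^ 2) =
      γ ^ 2 * S - 2 * γ * t + d := by
    rw [Finset.sum_congr rfl fun j _ => hrow j]
    rw [Finset.sum_add_distrib, Finset.sum_sub_distrib, ← Finset.mul_sum, ← Finset.mul_sum]
    simp [htrsum, hS]
  rw [hkey, hγ]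
  have hval : (t / S) ^ 2 * S - 2 * (t / S) * t + d = (d : ℝ) - t ^ 2 / S := by
    field_simp; ring
  rw [hval]
  -- from Cordes: d - 1 + ε ≤ t^2 / S
  have hden : 0 < (d : ℝ) - 1 + ε := by
    have : (1 : ℝ) ≤ d := by exact_mod_cast hd
    linarith
  have h1 : S * ((d : ℝ) - 1 + ε) ≤ t ^ 2 := by
    rw [← le_div_iff₀ hden] at *
    exact hCordes
  have h2 : (d : ℝ) - 1 + ε ≤ t ^ 2 / S := by
    rw [le_div_iff₀ hSpos]
    linarith [h1]
  linarith
end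

section
/- (Cordes inequality.) Let d ≥ 1, let A be a real symmetric d×d matrix with tr A > 0, let ε ∈ (0,1], and assume A satisfies the Cordes condition with parameter ε, i.e. ‖A‖_F² ≤ (tr A)²/(d−1+ε). Set γ := tr A/‖A‖_F². Then for every real d×d matrix M it holds that |γ·(A : M) − tr M| ≤ √(1 − ε)·‖M‖_F. -/
open Matrix
open scoped BigOperators

/-- the Cordes inequality
`|γ (A : M) − tr M| ≤ √(1−ε) ‖M‖_F`. -/
theorem statement12
    (d : ℕ) (hd : 1 ≤ d)
    (A : Matrix (Fin d) (Fin d) ℝ) (hA : A.IsSymm) (htr : 0 < A.trace)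
    (ε : ℝ) (hε0 : 0 < ε) (hε1 : ε ≤ 1)
    (hCordes : (∑ j : Fin d, ∑ k : Fin d, A j k ^ 2) ≤
      A.trace ^ 2 / ((d : ℝ) - 1 + ε))
    (γ : ℝ) (hγ : γ = A.trace / ∑ j : Fin d, ∑ k : Fin d, A j k ^ 2) :
    ∀ M : Matrix (Fin d) (Fin d) ℝ,
      |γ * (∑ j : Fin d, ∑ k : Fin d, A j k * M j k) - M.trace| ≤
        Real.sqrt (1 - ε) * Real.sqrt (∑ j : Fin d, ∑ k : Fin d, M j k ^ 2) := by
  intro M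
  set t : ℝ := A.trace with ht
  set s : ℝ := (∑ j : Fin d, ∑ k : Fin d, A j k ^ 2) with hs
  have hsnn : 0 ≤ s :=
    Finset.sum_nonneg fun j _ => Finset.sum_nonneg fun k _ => sq_nonneg _
  have hs0 : 0 < s := by
    rcases hsnn.lt_or_eq with h | h
    · exact h
    · exfalso
      have hz : ∀ j ∈ Finset.univ, (∑ k : Fin d, A j k ^ 2) = 0 :=
        (Finset.sum_eq_zero_iff_of_nonneg
          (fun j _ => Finset.sum_nonneg fun k _ => sq_nonneg _)).1 h.symm
      have hz2 : ∀ j k : Fin d, A j k = 0 := by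
        intro j k
        have := (Finset.sum_eq_zero_iff_of_nonneg
          (fun k _ => sq_nonneg (A j k))).1 (hz j (Finset.mem_univ j)) k (Finset.mem_univ k)
        nlinarith [this, sq_nonneg (A j k)]
      have : t = 0 := by
        simp [ht, Matrix.trace, Matrix.diag, hz2]
      exact absurd (this ▸ htr) (lt_irrefl 0)
  -- the "deviation" matrix F = γA − I
  set F : Fin d → Fin d → ℝ := fun j k => γ * A j k - (if j = k then 1 else 0) with hF
  have htrM : M.trace = ∑ j : Fin d, ∑ k : Fin d, (if j = k then (1:ℝ) else 0) * M j k := by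
    simp [Matrix.trace, Matrix.diag, ite_mul, Finset.sum_ite_eq]
  have hX : γ * (∑ j : Fin d, ∑ k : Fin d, A j k * M j k) - M.trace
      = ∑ j : Fin d, ∑ k : Fin d, F j k * M j k := by
    rw [htrM, Finset.mul_sum, ← Finset.sum_sub_distrib]
    refine Finset.sum_congr rfl fun j _ => ?_
    rw [Finset.mul_sum, ← Finset.sum_sub_distrib]
    refine Finset.sum_congr rfl fun k _ => ?_
    simp only [hF]
    split <;> ring
  have htA : ∑ j : Fin d, A j j = t := by
    simp [ht, Matrix.trace, Matrix.diag]
  have hP : (∑ j : Fin d, ∑ k : Fin d, F j k ^ 2) = γ ^ 2 * s - 2 * γ * t + d := by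
    have expand : ∀ j k : Fin d, F j k ^ 2 =
        γ ^ 2 * A j k ^ 2 - 2 * γ * ((if j = k then (1:ℝ) else 0) * A j k)
          + (if j = k then (1:ℝ) else 0) := by
      intro j k
      simp only [hF]
      split <;> ring
    simp_rw [expand, Finset.sum_add_distrib, Finset.sum_sub_distrib, ← Finset.mul_sum,
      ite_mul, zero_mul, one_mul, Finset.sum_ite_eq, Finset.mem_univ, if_true]
    rw [htA]
    simp [hs]
  have hden : (0:ℝ) < (d : ℝ) - 1 + ε := by
    have : (1:ℝ) ≤ (d:ℝ) := by exact_mod_cast hd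
    linarith
  have hPle : (∑ j : Fin d, ∑ k : Fin d, F j k ^ 2) ≤ 1 - ε := by
    rw [hP, hγ]
    have hC : s * ((d : ℝ) - 1 + ε) ≤ t ^ 2 := by
      calc s * ((d : ℝ) - 1 + ε) ≤ (t ^ 2 / ((d : ℝ) - 1 + ε)) * ((d : ℝ) - 1 + ε) := by
            exact mul_le_mul_of_nonneg_right hCordes hden.le
        _ = t ^ 2 := div_mul_cancel₀ _ hden.ne'
    have h1 : (t / s) ^ 2 * s = t ^ 2 / s := by field_simp
    have h2 : 2 * (t / s) * t = 2 * (t ^ 2 / s) := by field_simp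
    rw [h1, h2]
    have h3 : (d : ℝ) - 1 + ε ≤ t ^ 2 / s := (le_div_iff₀ hs0).2 (by linarith [hC])
    linarith
  -- Cauchy–Schwarz
  have CS := Finset.sum_mul_sq_le_sq_mul_sq Finset.univ
    (fun p : Fin d × Fin d => F p.1 p.2) (fun p : Fin d × Fin d => M p.1 p.2)
  rw [Fintype.sum_prod_type, Fintype.sum_prod_type, Fintype.sum_prod_type] at CS
  have hQnn : (0:ℝ) ≤ ∑ j : Fin d, ∑ k : Fin d, M j k ^ 2 :=
    Finset.sum_nonneg fun j _ => Finset.sum_nonneg fun k _ => sq_nonneg _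
  rw [hX]
  calc |∑ j : Fin d, ∑ k : Fin d, F j k * M j k|
      ≤ Real.sqrt ((∑ j : Fin d, ∑ k : Fin d, F j k ^ 2) *
          (∑ j : Fin d, ∑ k : Fin d, M j k ^ 2)) := Real.abs_le_sqrt CS
    _ = Real.sqrt (∑ j : Fin d, ∑ k : Fin d, F j k ^ 2) *
          Real.sqrt (∑ j : Fin d, ∑ k : Fin d, M j k ^ 2) := Real.sqrt_mul
            (Finset.sum_nonneg fun j _ => Finset.sum_nonneg fun k _ => sq_nonneg _) _
    _ ≤ Real.sqrt (1 - ε) * Real.sqrt (∑ j : Fin d, ∑ k : Fin d, M j k ^ 2) := by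
        exact mul_le_mul_of_nonneg_right (Real.sqrt_le_sqrt hPle) (Real.sqrt_nonneg _)
end

section
/- (The discrete DPG system is symmetric and positive definite.) Assume b satisfies the inf-sup condition with constant γ > 0 and that there is a Fortin operator Π_F : V → V_h with constant C_F for the subspace U_h. Then the bilinear form a_h(u_h, w_h) := b(u_h, Θ_h w_h) on U_h satisfies a_h(u_h, w_h) = ⟨Θ_h u_h, Θ_h w_h⟩_V for all u_h, w_h ∈ U_h; in particular a_h is symmetric, and it is positive definite with a_h(u_h, u_h) ≥ (γ/C_F)²·‖u_h‖_U² for all u_h ∈ U_h. -/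
open scoped InnerProductSpace

/-- the discrete DPG system is symmetric and positive definite. -/
theorem statement14
    {U V : Type*} [NormedAddCommGroup U] [InnerProductSpace ℝ U] [CompleteSpace U]
    [NormedAddCommGroup V] [InnerProductSpace ℝ V] [CompleteSpace V]
    (b : U →L[ℝ] V →L[ℝ] ℝ) (M γ : ℝ)
    (hM : ∀ (u : U) (v : V), |b u v| ≤ M * ‖u‖ * ‖v‖)
    (hγ : 0 < γ)
    (hinfsup : ∀ u : U, γ * ‖u‖ ≤ ⨆ v : {v : V // v ≠ 0}, b u v.1 / ‖v.1‖)
    (Uh : Submodule ℝ U) (Vh : Submodule ℝ V) (hVh : IsClosed (Vh : Set V))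
    (PiF : V →ₗ[ℝ] V) (hPiFmem : ∀ v : V, PiF v ∈ Vh)
    (CF : ℝ) (hCF : 0 < CF)
    (hPiFbdd : ∀ v : V, ‖PiF v‖ ≤ CF * ‖v‖)
    (hFortin : ∀ uh ∈ Uh, ∀ v : V, b uh (PiF v) = b uh v)
    (Θh : Uh → V) (hΘhmem : ∀ uh : Uh, Θh uh ∈ Vh)
    (hΘh : ∀ (uh : Uh), ∀ vh ∈ Vh, ⟪Θh uh, vh⟫_ℝ = b uh vh) :
    (∀ uh wh : Uh, b uh (Θh wh) = ⟪Θh uh, Θh wh⟫_ℝ) ∧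
    (∀ uh wh : Uh, b uh (Θh wh) = b wh (Θh uh)) ∧
    (∀ uh : Uh, (γ / CF) ^ 2 * ‖(uh : U)‖ ^ 2 ≤ b uh (Θh uh)) := by
  have key : ∀ uh wh : Uh, (b uh (Θh wh) : ℝ) = ⟪Θh uh, Θh wh⟫_ℝ := fun uh wh =>
    (hΘh uh (Θh wh) (hΘhmem wh)).symm
  refine ⟨key, fun uh wh => ?_, fun uh => ?_⟩
  · rw [key uh wh, key wh uh, real_inner_comm]
  · -- γ ‖uh‖ ≤ CF ‖Θh uh‖
    have hbound : γ * ‖(uh : U)‖ ≤ CF * ‖Θh uh‖ := by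
      refine (hinfsup uh).trans ?_
      by_cases hne : Nonempty {v : V // v ≠ 0}
      · refine ciSup_le fun v => ?_
        have hv0 : (0 : ℝ) < ‖v.1‖ := norm_pos_iff.mpr v.2
        rw [div_le_iff₀ hv0]
        have h1 : (b uh v.1 : ℝ) = ⟪Θh uh, PiF v.1⟫_ℝ := by
          rw [hΘh uh (PiF v.1) (hPiFmem v.1), hFortin uh uh.2 v.1]
        calc (b uh v.1 : ℝ) ≤ ‖Θh uh‖ * ‖PiF v.1‖ := by
              rw [h1]; exact real_inner_le_norm _ _
          _ ≤ ‖Θh uh‖ * (CF * ‖v.1‖) :=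
              mul_le_mul_of_nonneg_left (hPiFbdd v.1) (norm_nonneg _)
          _ = CF * ‖Θh uh‖ * ‖v.1‖ := by ring
      · haveI := not_nonempty_iff.mp hne
        rw [iSup_of_empty', Real.sSup_empty]
        positivity
    have h2 : (γ / CF) * ‖(uh : U)‖ ≤ ‖Θh uh‖ := by
      rw [div_mul_eq_mul_div, div_le_iff₀ hCF]
      linarith [hbound]
    calc (γ / CF) ^ 2 * ‖(uh : U)‖ ^ 2 = ((γ / CF) * ‖(uh : U)‖) ^ 2 := by ring
      _ ≤ ‖Θh uh‖ ^ 2 := by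
          apply sq_le_sq' _ h2
          have : (0:ℝ) ≤ (γ / CF) * ‖(uh : U)‖ := by positivity
          linarith
      _ = ⟪Θh uh, Θh uh⟫_ℝ := (real_inner_self_eq_norm_sq _).symm
      _ = b uh (Θh uh) := hΘh uh (Θh uh) (hΘhmem uh)
end

section
/- (Equivalence of the DPG and least-squares residual estimators.) Let V = V₁ × V₂ with ‖(v₁,v₂)‖_V² = ‖v₁‖² + ‖v₂‖², let T : U → V₁ be a bounded linear operator, c : U × V₂ → ℝ a bounded bilinear form, and b(u,(v₁,v₂)) := ⟨Tu, v₁⟩_{V₁} + c(u, v₂). Let W_h ⊆ V₁ and Q_h ⊆ V₂ be subspaces, V_h := W_h × Q_h, fix g ∈ V₁, and define F(v₁,v₂) := ⟨g, v₁⟩_{V₁}. For any u_h ∈ U, define the DPG residual ‖F − Bu_h‖_{V_h'} := sup_{0≠(w,q)∈V_h} |F(w,q) − b(u_h,(w,q))|/‖(w,q)‖_V and the least-squares residual ‖Cu_h‖_{Q_h'} := sup_{0≠q∈Q_h} |c(u_h, q)|/‖q‖. Then ‖Cu_h‖_{Q_h'} ≤ ‖F − Bu_h‖_{V_h'} ≤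 ‖Cu_h‖_{Q_h'} + ‖g − T u_h‖_{V₁}. -/
open scoped InnerProductSpace

private lemma fst_le_norm {V₁ V₂ : Type*} [NormedAddCommGroup V₁] [NormedAddCommGroup V₂]
    (x : WithLp 2 (V₁ × V₂)) : ‖x.fst‖ ≤ ‖x‖ := by
  rw [WithLp.prod_norm_eq_of_L2]
  calc ‖x.fst‖ = Real.sqrt (‖x.fst‖ ^ 2) := (Real.sqrt_sq (norm_nonneg _)).symm
    _ ≤ Real.sqrt (‖x.fst‖ ^ 2 + ‖x.snd‖ ^ 2) := Real.sqrt_le_sqrt (by nlinarith [sq_nonneg ‖x.snd‖])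

private lemma snd_le_norm {V₁ V₂ : Type*} [NormedAddCommGroup V₁] [NormedAddCommGroup V₂]
    (x : WithLp 2 (V₁ × V₂)) : ‖x.snd‖ ≤ ‖x‖ := by
  rw [WithLp.prod_norm_eq_of_L2]
  calc ‖x.snd‖ = Real.sqrt (‖x.snd‖ ^ 2) := (Real.sqrt_sq (norm_nonneg _)).symm
    _ ≤ Real.sqrt (‖x.fst‖ ^ 2 + ‖x.snd‖ ^ 2) := Real.sqrt_le_sqrt (by nlinarith [sq_nonneg ‖x.fst‖])

/-- equivalence of the DPG residual and the least-squares
residual estimators: `‖Cu_h‖_{Q_h'} ≤ ‖F − Bu_h‖_{V_h'} ≤ ‖Cu_h‖_{Q_h'} + ‖g − Tu_h‖`. -/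
theorem statement15
    {U V₁ V₂ : Type*} [NormedAddCommGroup U] [InnerProductSpace ℝ U] [CompleteSpace U]
    [NormedAddCommGroup V₁] [InnerProductSpace ℝ V₁] [CompleteSpace V₁]
    [NormedAddCommGroup V₂] [InnerProductSpace ℝ V₂] [CompleteSpace V₂]
    (T : U →L[ℝ] V₁) (c : U →L[ℝ] V₂ →L[ℝ] ℝ)
    (b : U → WithLp 2 (V₁ × V₂) → ℝ)
    (hb : ∀ (u : U) (v : WithLp 2 (V₁ × V₂)),
      b u v = ⟪T u, (WithLp.equiv 2 (V₁ × V₂) v).1⟫_ℝ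
        + c u (WithLp.equiv 2 (V₁ × V₂) v).2)
    (Wh : Submodule ℝ V₁) (Qh : Submodule ℝ V₂)
    (g : V₁) (F : WithLp 2 (V₁ × V₂) → ℝ)
    (hF : ∀ v : WithLp 2 (V₁ × V₂), F v = ⟪g, (WithLp.equiv 2 (V₁ × V₂) v).1⟫_ℝ)
    (uh : U) (ηdpg ηls : ℝ)
    (hηdpg : ηdpg = ⨆ p : {p : V₁ × V₂ // p.1 ∈ Wh ∧ p.2 ∈ Qh ∧ p ≠ 0},
      |F ((WithLp.equiv 2 (V₁ × V₂)).symm p.1) -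
        b uh ((WithLp.equiv 2 (V₁ × V₂)).symm p.1)| /
          ‖(WithLp.equiv 2 (V₁ × V₂)).symm p.1‖)
    (hηls : ηls = ⨆ q : {q : V₂ // q ∈ Qh ∧ q ≠ 0}, |c uh q.1| / ‖q.1‖) :
    ηls ≤ ηdpg ∧ ηdpg ≤ ηls + ‖g - T uh‖ := by
  -- setup
  set A := ‖g - T uh‖ with hA
  have hA0 : 0 ≤ A := norm_nonneg _
  -- rewrite the DPG numerator
  have key : ∀ v : WithLp 2 (V₁ × V₂),
      F v - b uh v = ⟪g - T uh, (WithLp.equiv 2 (V₁ × V₂) v).1⟫_ℝ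
        - c uh (WithLp.equiv 2 (V₁ × V₂) v).2 := by
    intro v
    rw [hF, hb, inner_sub_left]
    ring
  -- the functions
  set fdpg : {p : V₁ × V₂ // p.1 ∈ Wh ∧ p.2 ∈ Qh ∧ p ≠ 0} → ℝ :=
    fun p => |F ((WithLp.equiv 2 (V₁ × V₂)).symm p.1) -
        b uh ((WithLp.equiv 2 (V₁ × V₂)).symm p.1)| /
          ‖(WithLp.equiv 2 (V₁ × V₂)).symm p.1‖ with hfdpg
  set fls : {q : V₂ // q ∈ Qh ∧ q ≠ 0} → ℝ := fun q => |c uh q.1| / ‖q.1‖ with hfls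
  have hfls_nonneg : ∀ q, 0 ≤ fls q := fun q => div_nonneg (abs_nonneg _) (norm_nonneg _)
  have hfdpg_nonneg : ∀ p, 0 ≤ fdpg p := fun p => div_nonneg (abs_nonneg _) (norm_nonneg _)
  have hls_bdd : BddAbove (Set.range fls) := by
    refine ⟨‖c uh‖, ?_⟩
    rintro x ⟨q, rfl⟩
    rw [hfls]
    simp only
    rw [div_le_iff₀ (norm_pos_iff.2 q.2.2)]
    simpa using (c uh).le_opNorm q.1
  have hnorm_pos : ∀ p : {p : V₁ × V₂ // p.1 ∈ Wh ∧ p.2 ∈ Qh ∧ p ≠ 0},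
      0 < ‖(WithLp.equiv 2 (V₁ × V₂)).symm p.1‖ := by
    intro p
    rw [norm_pos_iff]
    simpa using p.2.2.2
  -- pointwise bound for the DPG function
  have hpt : ∀ p, fdpg p ≤ A + |c uh ((WithLp.equiv 2 (V₁ × V₂)).symm p.1 : WithLp 2 (V₁ × V₂)).snd| /
      ‖((WithLp.equiv 2 (V₁ × V₂)).symm p.1 : WithLp 2 (V₁ × V₂))‖ := by
    intro p
    set v := (WithLp.equiv 2 (V₁ × V₂)).symm p.1 with hv
    have hvpos := hnorm_pos p
    rw [hfdpg]
    simp only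
    rw [key]
    simp only [Equiv.apply_symm_apply, ← hv]
    have hvpos' : (0:ℝ) < ‖v‖ := hvpos
    rw [add_div' _ _ _ hvpos'.ne', div_le_div_iff_of_pos_right hvpos']
    have h1 : |⟪g - T uh, (WithLp.equiv 2 (V₁ × V₂) v).1⟫_ℝ| ≤ A * ‖v‖ := by
      calc |⟪g - T uh, (WithLp.equiv 2 (V₁ × V₂) v).1⟫_ℝ|
          ≤ A * ‖(WithLp.equiv 2 (V₁ × V₂) v).1‖ := abs_real_inner_le_norm _ _
        _ ≤ A * ‖v‖ := by
            exact mul_le_mul_of_nonneg_left (fst_le_norm v) hA0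
    calc |⟪g - T uh, (WithLp.equiv 2 (V₁ × V₂) v).1⟫_ℝ - c uh (WithLp.equiv 2 (V₁ × V₂) v).2|
        ≤ |⟪g - T uh, (WithLp.equiv 2 (V₁ × V₂) v).1⟫_ℝ| + |c uh (WithLp.equiv 2 (V₁ × V₂) v).2| :=
          abs_sub _ _
      _ ≤ A * ‖v‖ + |c uh ((WithLp.equiv 2 (V₁ × V₂)) v).2| := by exact add_le_add h1 le_rfl
  have hdpg_bdd : BddAbove (Set.range fdpg) := by
    refine ⟨A + ‖c uh‖, ?_⟩
    rintro x ⟨p, rfl⟩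
    refine (hpt p).trans (add_le_add le_rfl ?_)
    set v := (WithLp.equiv 2 (V₁ × V₂)).symm p.1 with hv
    have hvpos := hnorm_pos p
    rw [div_le_iff₀ hvpos]
    calc |c uh v.snd| ≤ ‖c uh‖ * ‖v.snd‖ := by
          simpa using (c uh).le_opNorm v.snd
      _ ≤ ‖c uh‖ * ‖v‖ := mul_le_mul_of_nonneg_left (snd_le_norm v) (norm_nonneg _)
  have hls_nonneg : 0 ≤ ηls := hηls ▸ Real.iSup_nonneg hfls_nonneg
  have hdpg_nonneg : 0 ≤ ηdpg := hηdpg ▸ Real.iSup_nonneg hfdpg_nonneg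
  constructor
  · -- ηls ≤ ηdpg
    rw [hηls]
    by_cases h : Nonempty {q : V₂ // q ∈ Qh ∧ q ≠ 0}
    · refine ciSup_le fun q => ?_
      have hq : ((0 : V₁), q.1).1 ∈ Wh ∧ ((0 : V₁), q.1).2 ∈ Qh ∧ ((0 : V₁), q.1) ≠ 0 := by
        refine ⟨Wh.zero_mem, q.2.1, ?_⟩
        simp [Prod.ext_iff, q.2.2]
      have hle : fls q ≤ ηdpg := by
        rw [hηdpg]
        refine le_trans ?_ (le_ciSup hdpg_bdd ⟨((0 : V₁), q.1), hq⟩)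
        rw [hfls, hfdpg]
        simp only
        rw [key]
        have hnorm : ‖((WithLp.equiv 2 (V₁ × V₂)).symm ((0 : V₁), q.1) : WithLp 2 (V₁ × V₂))‖
            = ‖q.1‖ := by
          rw [WithLp.prod_norm_eq_of_L2]
          simp [Real.sqrt_sq (norm_nonneg _)]
        rw [hnorm]
        simp [Equiv.apply_symm_apply]
      exact hle
    · rw [not_nonempty_iff] at h
      rw [Real.iSup_of_isEmpty]
      exact hdpg_nonneg
  · -- ηdpg ≤ ηls + A
    rw [hηdpg]
    by_cases h : Nonempty {p : V₁ × V₂ // p.1 ∈ Wh ∧ p.2 ∈ Qh ∧ p ≠ 0}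
    · refine ciSup_le fun p => ?_
      refine (hpt p).trans ?_
      rw [add_comm ηls A]
      refine add_le_add le_rfl ?_
      set v := (WithLp.equiv 2 (V₁ × V₂)).symm p.1 with hv
      by_cases hv2 : (v : WithLp 2 (V₁ × V₂)).snd = 0
      · rw [hv2]
        simpa using hls_nonneg
      · have : |c uh v.snd| / ‖v‖ ≤ |c uh v.snd| / ‖v.snd‖ :=
          div_le_div_of_nonneg_left (abs_nonneg _) (norm_pos_iff.2 hv2) (snd_le_norm v)
        refine this.trans ?_
        rw [hηls]
        exact le_ciSup hls_bdd ⟨v.snd, p.2.2.1, hv2⟩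
    · rw [not_nonempty_iff] at h
      rw [Real.iSup_of_isEmpty]
      exact add_nonneg hls_nonneg hA0
end
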